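/- Every mutual search algorithm for two agents on n sites has cost at least (4 − 2√3)(n − 1). -/
import Mathlib


/-- An ordered tournament on `n` sites: a tournament (exactly one directed
edge between each pair of distinct vertices) together with a total order
on its edges, given by an (injective-on-edges) time stamp. -/
structure OrdTournament (n : ℕ) where
  adj : Fin n → Fin n → Bool
  irrefl : ∀ i, adj i i = false
  oneway : ∀ i j : Fin n, i ≠ j → (adj i j = true ↔ adj j i = false)
  time : Fin n → Fin n → ℕ
  time_inj : ∀ i j k l : Fin n, adj i j = true → adj k l = true →
      time i j = time k l → (i, j) = (k, l)

namespace OrdTournament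

variable {n : ℕ}

/-- Row `i`: the targets of the out-edges of vertex `i`. -/
def row (T : OrdTournament n) (i : Fin n) : Finset (Fin n) :=
  Finset.univ.filter (fun j => T.adj i j = true)

/-- The length of row `i` (the outdegree of `i`). -/
def rowLen (T : OrdTournament n) (i : Fin n) : ℕ := (T.row i).card

/-- The maximum row length. -/
def maxRow (T : OrdTournament n) : ℕ := Finset.univ.sup T.rowLen

/-- The number of queries of row `i` strictly before the edge `(a,b)`. -/
def nBefore (T : OrdTournament n) (i a b : Fin n) : ℕ :=
  ((T.row i).filter (fun j => T.time i j < T.time a b)).card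

/-- The cost of edge `(a,b)`:
`|E_a^{≺(a,b)}| + 1 + |E_b^{≺(a,b)}|`. -/
def edgeCost (T : OrdTournament n) (a b : Fin n) : ℕ :=
  T.nBefore a a b + 1 + T.nBefore b a b

/-- The cost of the algorithm: the maximum edge cost. -/
def cost (T : OrdTournament n) : ℕ :=
  (Finset.univ.filter (fun p : Fin n × Fin n => T.adj p.1 p.2 = true)).sup
    (fun p => T.edgeCost p.1 p.2)

variable (T : OrdTournament n)

lemma adj_ne {i j : Fin n} (h : T.adj i j = true) : i ≠ j := by
  rintro rfl
  rw [T.irrefl] at h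
  simp at h

lemma edgeCost_le_cost {a b : Fin n} (h : T.adj a b = true) :
    T.edgeCost a b ≤ T.cost :=
  Finset.le_sup (f := fun p : Fin n × Fin n => T.edgeCost p.1 p.2)
    (Finset.mem_filter.2 ⟨Finset.mem_univ (a, b), h⟩)

lemma rowLen_le_cost (v : Fin n) : T.rowLen v ≤ T.cost := by
  rcases (T.row v).eq_empty_or_nonempty with he | hne
  · simp [rowLen, he]
  · obtain ⟨j, hj, hmax⟩ := Finset.exists_max_image (T.row v) (fun j => T.time v j) hne
    have hadj : T.adj v j = true := (Finset.mem_filter.1 hj).2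
    have hsub : (T.row v).erase j ⊆
        (T.row v).filter (fun j' => T.time v j' < T.time v j) := by
      intro x hx
      have hxr := Finset.mem_of_mem_erase hx
      have hxne := Finset.ne_of_mem_erase hx
      refine Finset.mem_filter.2 ⟨hxr, ?_⟩
      rcases lt_or_eq_of_le (hmax x hxr) with h | h
      · exact h
      · exact absurd (congrArg Prod.snd
          (T.time_inj v x v j (Finset.mem_filter.1 hxr).2 hadj h)) hxne
    have h1 := Finset.card_le_card hsub
    have h2 := Finset.card_erase_add_one hj
    have h3 : T.rowLen v ≤ T.nBefore v v j + 1 := by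
      unfold rowLen nBefore
      omega
    have h4 := T.edgeCost_le_cost hadj
    unfold edgeCost at h4
    omega

lemma two_mul_sum_rowLen : 2 * ∑ v, T.rowLen v = n * n - n := by
  classical
  set S := Finset.univ.filter (fun p : Fin n × Fin n => T.adj p.1 p.2 = true) with hS
  have step1 : S.card = ∑ v, T.rowLen v := by
    rw [hS, Finset.card_filter, Fintype.sum_prod_type]
    refine Finset.sum_congr rfl fun v _ => ?_
    rw [rowLen, row, Finset.card_filter]
  set Sf := Finset.univ.offDiag.filter (fun p : Fin n × Fin n => T.adj p.1 p.2 = false)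
    with hSf
  have hSeq : Finset.univ.offDiag.filter
      (fun p : Fin n × Fin n => T.adj p.1 p.2 = true) = S := by
    ext p
    simp only [hS, Finset.mem_filter, Finset.mem_offDiag, Finset.mem_univ, true_and,
      and_iff_right_iff_imp]
    exact fun h => T.adj_ne h
  have step2 : Sf.card = S.card := by
    refine Finset.card_nbij' (fun p => (p.2, p.1)) (fun p => (p.2, p.1)) ?_ ?_ ?_ ?_
    · intro p hp
      obtain ⟨hod, hf⟩ := Finset.mem_filter.1 hp
      obtain ⟨-, -, hne⟩ := Finset.mem_offDiag.1 hod
      exact Finset.mem_filter.2 ⟨Finset.mem_univ _, (T.oneway p.2 p.1 (Ne.symm hne)).2 hf⟩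
    · intro p hp
      have hadj := (Finset.mem_filter.1 hp).2
      have hne := T.adj_ne hadj
      refine Finset.mem_filter.2 ⟨Finset.mem_offDiag.2
        ⟨Finset.mem_univ _, Finset.mem_univ _, Ne.symm hne⟩, ?_⟩
      exact (T.oneway p.1 p.2 hne).1 hadj
    · intro p _; rfl
    · intro p _; rfl
  have step3 : S.card + Sf.card = (Finset.univ : Finset (Fin n)).offDiag.card := by
    rw [← hSeq]
    have heq : Sf = Finset.univ.offDiag.filter
        (fun p : Fin n × Fin n => ¬ T.adj p.1 p.2 = true) := by
      rw [hSf]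
      apply Finset.filter_congr
      intro p _
      simp
    rw [heq]
    exact Finset.card_filter_add_card_filter_not
      (fun p : Fin n × Fin n => T.adj p.1 p.2 = true)
  have step4 : (Finset.univ : Finset (Fin n)).offDiag.card = n * n - n := by
    rw [Finset.offDiag_card, Finset.card_univ, Fintype.card_fin]
  omega

lemma key (A : Finset (Fin n)) (hA : 2 ≤ A.card) :
    ∃ i ∈ A, ∃ j ∈ A, i ≠ j ∧
      T.rowLen i + T.rowLen j ≤ T.cost + 2 * (n - A.card) := by
  classical
  set EA := A.offDiag.filter (fun p : Fin n × Fin n => T.adj p.1 p.2 = true) with hEA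
  have hne : EA.Nonempty := by
    obtain ⟨i, hi, j, hj, hij⟩ := Finset.one_lt_card.1 hA
    by_cases h : T.adj i j = true
    · exact ⟨(i, j), Finset.mem_filter.2 ⟨Finset.mem_offDiag.2 ⟨hi, hj, hij⟩, h⟩⟩
    · have hfalse : T.adj i j = false := by
        cases hb : T.adj i j
        · rfl
        · exact absurd hb h
      exact ⟨(j, i), Finset.mem_filter.2 ⟨Finset.mem_offDiag.2 ⟨hj, hi, Ne.symm hij⟩,
        (T.oneway j i (Ne.symm hij)).2 hfalse⟩⟩
  obtain ⟨p, hp, hpmax⟩ := Finset.exists_max_image EA (fun p => T.time p.1 p.2) hne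
  obtain ⟨hod, hpadj⟩ := Finset.mem_filter.1 hp
  obtain ⟨hp1A, hp2A, hpne⟩ := Finset.mem_offDiag.1 hod
  refine ⟨p.1, hp1A, p.2, hp2A, hpne, ?_⟩
  -- bound 1
  have b1 : (T.row p.1 ∩ A).erase p.2 ⊆
      (T.row p.1).filter (fun x => T.time p.1 x < T.time p.1 p.2) := by
    intro x hx
    have hxne := Finset.ne_of_mem_erase hx
    obtain ⟨hxr, hxA⟩ := Finset.mem_inter.1 (Finset.mem_of_mem_erase hx)
    have hxadj : T.adj p.1 x = true := (Finset.mem_filter.1 hxr).2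
    have hmem : (p.1, x) ∈ EA := Finset.mem_filter.2
      ⟨Finset.mem_offDiag.2 ⟨hp1A, hxA, T.adj_ne hxadj⟩, hxadj⟩
    refine Finset.mem_filter.2 ⟨hxr, ?_⟩
    rcases lt_or_eq_of_le (hpmax (p.1, x) hmem) with h | h
    · exact h
    · exact absurd (congrArg Prod.snd (T.time_inj p.1 x p.1 p.2 hxadj hpadj h)) hxne
  have b1' : (T.row p.1 ∩ A).card ≤ T.nBefore p.1 p.1 p.2 + 1 := by
    have hmem : p.2 ∈ T.row p.1 ∩ A := Finset.mem_inter.2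
      ⟨Finset.mem_filter.2 ⟨Finset.mem_univ _, hpadj⟩, hp2A⟩
    have := Finset.card_le_card b1
    have h2 := Finset.card_erase_add_one hmem
    unfold nBefore
    omega
  -- bound 2
  have b2 : T.row p.2 ∩ A ⊆
      (T.row p.2).filter (fun x => T.time p.2 x < T.time p.1 p.2) := by
    intro x hx
    obtain ⟨hxr, hxA⟩ := Finset.mem_inter.1 hx
    have hxadj : T.adj p.2 x = true := (Finset.mem_filter.1 hxr).2
    have hmem : (p.2, x) ∈ EA := Finset.mem_filter.2
      ⟨Finset.mem_offDiag.2 ⟨hp2A, hxA, T.adj_ne hxadj⟩, hxadj⟩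
    refine Finset.mem_filter.2 ⟨hxr, ?_⟩
    rcases lt_or_eq_of_le (hpmax (p.2, x) hmem) with h | h
    · exact h
    · exact absurd (congrArg Prod.fst (T.time_inj p.2 x p.1 p.2 hxadj hpadj h)).symm hpne
  have b2' : (T.row p.2 ∩ A).card ≤ T.nBefore p.2 p.1 p.2 :=
    Finset.card_le_card b2
  -- bound 3
  have b3 : ∀ v : Fin n, T.rowLen v ≤ (T.row v ∩ A).card + (n - A.card) := by
    intro v
    have hsub : T.row v ⊆ (T.row v ∩ A) ∪ Aᶜ := by
      intro x hx
      by_cases hxA : x ∈ A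
      · exact Finset.mem_union_left _ (Finset.mem_inter.2 ⟨hx, hxA⟩)
      · exact Finset.mem_union_right _ (Finset.mem_compl.2 hxA)
    have h1 := Finset.card_le_card hsub
    have h2 := Finset.card_union_le (T.row v ∩ A) Aᶜ
    have h3 : (Aᶜ : Finset (Fin n)).card = n - A.card := by
      rw [Finset.card_compl, Fintype.card_fin]
    unfold rowLen
    omega
  have hec := T.edgeCost_le_cost hpadj
  unfold edgeCost at hec
  have h31 := b3 p.1
  have h32 := b3 p.2
  omega

end OrdTournament

open OrdTournament in
private lemma ms_final_algebra (s N M c : ℝ) (hs3 : s ^ 2 = 3) (hs1 : 1 ≤ s)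
    (hn2 : 2 ≤ N) (hMn : M ≤ N)
    (hm1 : M ≤ (2 + (4 - 2 * s) * (N - 1)) / 2)
    (hm2 : (2 + (4 - 2 * s) * (N - 1)) / 2 < M + 1)
    (hR : N * N - N ≤ M * c + (M * M - M) + (N - M) * (2 * c)) :
    (4 - 2 * s) * (N - 1) ≤ c := by
  have h4 : 5 ≤ 3 * s := by nlinarith
  have hδ : (M - (1 + (4 - 2 * s) * (N - 1)) / 2) ^ 2 ≤ 1 / 4 := by
    have ha : M - (1 + (4 - 2 * s) * (N - 1)) / 2 ≤ 1 / 2 := by linarith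
    have hb' : -(1 / 2) ≤ M - (1 + (4 - 2 * s) * (N - 1)) / 2 := by linarith
    have := sq_le_sq' hb' ha
    calc (M - (1 + (4 - 2 * s) * (N - 1)) / 2) ^ 2 ≤ (1 / 2) ^ 2 := this
      _ = 1 / 4 := by norm_num
  have e1 : (s ^ 2 - 3) * (N - 1) ^ 2 = 0 := by rw [hs3]; ring
  have h3 : (2 : ℝ) ≤ 2 * N - M := by linarith
  have hprod : (0 : ℝ) ≤ (N - 1) * (3 * s - 5) := by
    apply mul_nonneg <;> linarith
  have h2 : (4 - 2 * s) * (N - 1) * (2 * N - M) ≤ N * N - N - M * M + M := by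
    nlinarith [hδ, hprod, e1]
  by_contra hcon
  push_neg at hcon
  have hlt : c * (2 * N - M) < (4 - 2 * s) * (N - 1) * (2 * N - M) :=
    mul_lt_mul_of_pos_right hcon (by linarith)
  nlinarith [hR, h2, hlt]

/-- Every mutual search algorithm for two agents on `n` sites has cost at
least `(4 - 2√3)(n - 1)`. -/
theorem ms_lower_bound {n : ℕ} (T : OrdTournament n) :
    (4 - 2 * Real.sqrt 3) * ((n : ℝ) - 1) ≤ (T.cost : ℝ) := by
  classical
  set s := Real.sqrt 3 with hsdef
  have hs3 : s ^ 2 = 3 := Real.sq_sqrt (by norm_num)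
  have hs0 : 0 ≤ s := Real.sqrt_nonneg 3
  have hs1 : 1 ≤ s := by nlinarith
  have hs2 : s ≤ 2 := by nlinarith
  have h4 : 5 ≤ 3 * s := by nlinarith
  have hc0 : (0 : ℝ) ≤ (T.cost : ℝ) := Nat.cast_nonneg _
  rcases le_or_gt n 1 with hn | hn
  · have hn' : (n : ℝ) ≤ 1 := by exact_mod_cast hn
    nlinarith
  have hn2 : (2 : ℝ) ≤ (n : ℝ) := by exact_mod_cast hn
  rcases le_or_gt (2 * (n - 1)) T.cost with hc | hc
  · have hcast : ((2 * (n - 1) : ℕ) : ℝ) = 2 * ((n : ℝ) - 1) := by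
      rw [Nat.cast_mul, Nat.cast_sub (by omega : 1 ≤ n)]
      push_cast; ring
    have : 2 * ((n : ℝ) - 1) ≤ (T.cost : ℝ) := by
      rw [← hcast]; exact_mod_cast hc
    nlinarith
  -- now T.cost ≤ 2*(n-1) and n ≥ 2
  have hcr : (T.cost : ℝ) ≤ 2 * ((n : ℝ) - 1) := by
    have h := le_of_lt hc
    have hcast : ((2 * (n - 1) : ℕ) : ℝ) = 2 * ((n : ℝ) - 1) := by
      rw [Nat.cast_mul, Nat.cast_sub (by omega : 1 ≤ n)]
      push_cast; ring
    rw [← hcast]; exact_mod_cast h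
  set σ := Tuple.sort T.rowLen with hσ
  have hmono := Tuple.monotone_sort T.rowLen
  have hclaim : ∀ k : Fin n, 2 * T.rowLen (σ k) ≤ T.cost + 2 * (k : ℕ) := by
    intro k
    rcases le_or_gt ((k : ℕ) + 2) n with hk | hk
    · set A := (Finset.Ici k).image σ with hA
      have hcard : A.card = n - (k : ℕ) := by
        rw [hA, Finset.card_image_of_injective _ σ.injective, Fin.card_Ici]
      have h2 : 2 ≤ A.card := by omega
      obtain ⟨i, hiA, j, hjA, hij, hkey⟩ := T.key A h2
      have hgi : T.rowLen (σ k) ≤ T.rowLen i := by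
        obtain ⟨k', hk', rfl⟩ := Finset.mem_image.1 hiA
        exact hmono (Finset.mem_Ici.1 hk')
      have hgj : T.rowLen (σ k) ≤ T.rowLen j := by
        obtain ⟨k', hk', rfl⟩ := Finset.mem_image.1 hjA
        exact hmono (Finset.mem_Ici.1 hk')
      rw [hcard] at hkey
      have hkn : (k : ℕ) < n := k.isLt
      have : n - (n - (k : ℕ)) = (k : ℕ) := by omega
      omega
    · have h1 := T.rowLen_le_cost (σ k)
      have hkn : (k : ℕ) < n := k.isLt
      omega
  -- choose m
  set c := T.cost with hcdef
  set x : ℝ := (2 + (4 - 2 * s) * ((n : ℝ) - 1)) / 2 with hx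
  have hx0 : 0 ≤ x := by
    rw [hx]; nlinarith
  obtain ⟨m, hm1, hm2⟩ : ∃ m : ℕ, (m : ℝ) ≤ x ∧ x < (m : ℝ) + 1 :=
    ⟨⌊x⌋₊, Nat.floor_le hx0, Nat.lt_floor_add_one x⟩
  have hmn : m ≤ n := by
    have hxn : x ≤ (n : ℝ) := by rw [hx]; nlinarith
    have : (m : ℝ) ≤ (n : ℝ) := le_trans hm1 hxn
    exact_mod_cast this
  -- the counting inequality
  have hb : ∑ k : Fin n, 2 * T.rowLen (σ k)
      ≤ ∑ k ∈ Finset.range n, min (2 * c) (c + 2 * k) := by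
    rw [← Fin.sum_univ_eq_sum_range (fun k => min (2 * c) (c + 2 * k)) n]
    apply Finset.sum_le_sum
    intro k _
    exact le_min (by have := T.rowLen_le_cost (σ k); omega) (hclaim k)
  have hpart1 : ∑ k ∈ Finset.Ico 0 m, min (2 * c) (c + 2 * k)
      ≤ m * c + m * (m - 1) := by
    calc ∑ k ∈ Finset.Ico 0 m, min (2 * c) (c + 2 * k)
        ≤ ∑ k ∈ Finset.Ico 0 m, (c + 2 * k) :=
          Finset.sum_le_sum fun k _ => min_le_right _ _
      _ = m * c + m * (m - 1) := by
          rw [← Finset.range_eq_Ico, Finset.sum_add_distrib, Finset.sum_const,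
            Finset.card_range, smul_eq_mul]
          congr 1
          rw [← Finset.mul_sum]
          have h := Finset.sum_range_id_mul_two m
          rw [← h]; ring
  have hpart2 : ∑ k ∈ Finset.Ico m n, min (2 * c) (c + 2 * k)
      ≤ (n - m) * (2 * c) := by
    calc ∑ k ∈ Finset.Ico m n, min (2 * c) (c + 2 * k)
        ≤ ∑ _k ∈ Finset.Ico m n, 2 * c :=
          Finset.sum_le_sum fun k _ => min_le_left _ _
      _ = (n - m) * (2 * c) := by rw [Finset.sum_const, Nat.card_Ico, smul_eq_mul]
  have hsplit : ∑ k ∈ Finset.range n, min (2 * c) (c + 2 * k)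
      ≤ m * c + m * (m - 1) + (n - m) * (2 * c) := by
    rw [Finset.range_eq_Ico, ← Finset.sum_Ico_consecutive _ (Nat.zero_le m) hmn]
    exact add_le_add hpart1 hpart2
  have hNsum : n * n - n ≤ m * c + m * (m - 1) + (n - m) * (2 * c) := by
    calc n * n - n = 2 * ∑ v, T.rowLen v := (T.two_mul_sum_rowLen).symm
      _ = 2 * ∑ k : Fin n, T.rowLen (σ k) := by rw [Equiv.sum_comp σ T.rowLen]
      _ = ∑ k : Fin n, 2 * T.rowLen (σ k) := by rw [Finset.mul_sum]
      _ ≤ ∑ k ∈ Finset.range n, min (2 * c) (c + 2 * k) := hb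
      _ ≤ _ := hsplit
  -- cast to ℝ
  have hc1 : ((n * n - n : ℕ) : ℝ) = (n : ℝ) * n - n := by
    rw [Nat.cast_sub (Nat.le_mul_of_pos_left n (by omega))]
    push_cast; ring
  have hc2 : ((m * (m - 1) : ℕ) : ℝ) = (m : ℝ) * m - m := by
    rcases Nat.eq_zero_or_pos m with h0 | h0
    · simp [h0]
    · rw [Nat.cast_mul, Nat.cast_sub h0]
      push_cast; ring
  have hc3 : ((n - m : ℕ) : ℝ) = (n : ℝ) - m := by
    rw [Nat.cast_sub hmn]
  have hR : (n : ℝ) * n - n ≤ (m : ℝ) * c + ((m : ℝ) * m - m) + ((n : ℝ) - m) * (2 * c) := by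
    have h := (Nat.cast_le (α := ℝ)).2 hNsum
    rw [show ((m * c + m * (m - 1) + (n - m) * (2 * c) : ℕ) : ℝ)
        = (m : ℝ) * c + ((m * (m - 1) : ℕ) : ℝ) + ((n - m : ℕ) : ℝ) * (2 * c) by
      push_cast; ring] at h
    rw [hc1, hc2, hc3] at h
    exact h
  have hmnr : (m : ℝ) ≤ (n : ℝ) := by exact_mod_cast hmn
  rw [hx] at hm1 hm2
  exact ms_final_algebra s (n : ℝ) (m : ℝ) (c : ℝ) hs3 hs1 hn2 hmnr hm1 hm2 hR
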